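/- Let R be a generalized curvature tensor on a finite-dimensional real inner product space and B a self-adjoint endomorphism that is R-compatible. Then B commutes with the Ricci contraction of R: writing Ric(X,Y) = Σₐ R(eₐ, X, Y, eₐ) for an orthonormal basis (eₐ), one has Ric(BX, Y) = Ric(X, BY) for all X, Y. -/
import Mathlib


open RealInnerProductSpace

/-- If `R` is a generalized curvature tensor and `B` a self-adjoint `R`-compatible
endomorphism, then `B` commutes with the Ricci contraction of `R`:
`Ric(BX, Y) = Ric(X, BY)` where `Ric(X,Y) = ∑ₐ R(eₐ, X, Y, eₐ)` for an orthonormal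
basis `(eₐ)`. -/
theorem ricci_commutes_of_compatible
    {V : Type*} [NormedAddCommGroup V] [InnerProductSpace ℝ V] [FiniteDimensional ℝ V]
    (e : OrthonormalBasis (Fin (Module.finrank ℝ V)) ℝ V)
    (R : V →ₗ[ℝ] V →ₗ[ℝ] V →ₗ[ℝ] V →ₗ[ℝ] ℝ)
    (hanti1 : ∀ X Y Z W : V, R X Y Z W = - R Y X Z W)
    (hanti2 : ∀ X Y Z W : V, R X Y Z W = - R X Y W Z)
    (hpair : ∀ X Y Z W : V, R X Y Z W = R Z W X Y)
    (hbianchi : ∀ X Y Z W : V, R X Y Z W + R Y Z X W + R Z X Y W = 0)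
    (B : V →ₗ[ℝ] V)
    (hB : ∀ X Y : V, ⟪B X, Y⟫ = ⟪X, B Y⟫)
    (hcompat : ∀ X Y Z W : V, R (B X) Y Z W + R (B Y) Z X W + R (B Z) X Y W = 0) :
    ∀ X Y : V, (∑ a, R (e a) (B X) Y (e a)) = ∑ a, R (e a) X (B Y) (e a) := by
  have hzero : ∀ X Y Z : V, R X Y Z Z = 0 := by
    intro X Y Z
    have := hanti2 X Y Z Z
    linarith
  have hricsymm : ∀ (U W : V) (a), R (e a) U W (e a) = R (e a) W U (e a) := by
    intro U W a
    calc R (e a) U W (e a) = R W (e a) (e a) U := hpair _ _ _ _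
      _ = -R (e a) W (e a) U := hanti1 _ _ _ _
      _ = -(-R (e a) W U (e a)) := by rw [← hanti2 (e a) W (e a) U]
      _ = R (e a) W U (e a) := by ring
  have key1 : ∀ (X Y : V) (a), R (B (e a)) X Y (e a) = R (e a) X (B Y) (e a) := by
    intro X Y a
    have h := hcompat (e a) X Y (e a)
    have h2 : R (B X) Y (e a) (e a) = 0 := hzero _ _ _
    have h3 : R (B Y) (e a) X (e a) = - R (e a) X (B Y) (e a) := by
      rw [hanti1, hricsymm]
    linarith
  have hrep : ∀ x : V, ∑ b, ⟪e b, x⟫ • e b = x := by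
    intro x
    simpa [e.repr_apply_apply] using e.sum_repr x
  have hswap : ∀ X Y : V,
      ∑ a, R (B (e a)) X Y (e a) = ∑ a, R (e a) X Y (B (e a)) := by
    intro X Y
    calc ∑ a, R (B (e a)) X Y (e a)
        = ∑ a, ∑ b, ⟪e b, B (e a)⟫ * R (e b) X Y (e a) := by
          refine Finset.sum_congr rfl fun a _ => ?_
          conv_lhs => rw [← hrep (B (e a))]
          simp [map_sum, LinearMap.sum_apply, map_smul, LinearMap.smul_apply,
            smul_eq_mul]
      _ = ∑ b, ∑ a, ⟪e a, B (e b)⟫ * R (e b) X Y (e a) := by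
          rw [Finset.sum_comm]
          refine Finset.sum_congr rfl fun b _ => Finset.sum_congr rfl fun a _ => ?_
          rw [← hB (e b) (e a), real_inner_comm]
      _ = ∑ b, R (e b) X Y (B (e b)) := by
          refine Finset.sum_congr rfl fun b _ => ?_
          conv_rhs => rw [← hrep (B (e b))]
          simp [map_sum, map_smul, smul_eq_mul]
  intro X Y
  calc ∑ a, R (e a) (B X) Y (e a)
      = ∑ a, R (B (e a)) Y X (e a) := by
        refine Finset.sum_congr rfl fun a _ => ?_
        rw [key1 Y X a, hricsymm]
    _ = ∑ a, R (e a) Y X (B (e a)) := hswap Y X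
    _ = ∑ a, R (B (e a)) X Y (e a) := by
        refine Finset.sum_congr rfl fun a _ => ?_
        calc R (e a) Y X (B (e a)) = R X (B (e a)) (e a) Y := hpair _ _ _ _
          _ = -R (B (e a)) X (e a) Y := hanti1 _ _ _ _
          _ = -(-R (B (e a)) X Y (e a)) := by rw [← hanti2 (B (e a)) X (e a) Y]
          _ = R (B (e a)) X Y (e a) := by ring
    _ = ∑ a, R (e a) X (B Y) (e a) := by
        exact Finset.sum_congr rfl fun a _ => key1 X Y a
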